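/- Let 𝒪 ⊆ ℂ be open, x₀ ∈ 𝒪, let φ: 𝒪 → ℂ be holomorphic, let C: 𝒪 → ℂ be continuous and nonvanishing, and let ε: (0,∞) × 𝒪 → ℂ be a function such that ε(ħ, x) → 0 as ħ → 0⁺ uniformly for x in some neighborhood of x₀. Define J(ħ, x) := (C(x)/(2πħ)) · exp(i·φ(x)/(2πħ)) · (1 + ε(ħ, x)). Then for every natural number N, lim_{ħ→0⁺} J(ħ, x₀ + 2πNħ) / J(ħ, x₀) = exp(i·N·φ′(x₀)). -/

import Mathlib

open Real Filter

/-- The Jones function with semiclassical expansion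
`J(ℏ, x) = (C(x)/(2πℏ)) exp(i φ(x)/(2πℏ)) (1 + ε(ℏ, x))`. -/
noncomputable def Jfun (C φ : ℂ → ℂ) (ε : ℝ → ℂ → ℂ) (hb : ℝ) (x : ℂ) : ℂ :=
  (C x / (2 * (π : ℂ) * (hb : ℂ))) *
    Complex.exp (Complex.I * φ x / (2 * (π : ℂ) * (hb : ℂ))) * (1 + ε hb x)

/-- The key limit computation in the proof of Theorem 1.13 (AJ): for a Jones
function with semiclassical asymptotics governed by `φ`,
`J(ℏ, x₀ + 2πNℏ)/J(ℏ, x₀) → exp(i N φ'(x₀))` as `ℏ → 0⁺`. -/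
theorem stmt_11 (𝒪 : Set ℂ) (h𝒪 : IsOpen 𝒪) (x₀ : ℂ) (hx₀ : x₀ ∈ 𝒪)
    (φ C : ℂ → ℂ) (hφ : DifferentiableOn ℂ φ 𝒪)
    (hC : ContinuousOn C 𝒪) (hC0 : ∀ x ∈ 𝒪, C x ≠ 0)
    (ε : ℝ → ℂ → ℂ)
    (hε : ∃ V ∈ nhds x₀,
      TendstoUniformlyOn (fun hb x => ε hb x) (fun _ => 0)
        (nhdsWithin 0 (Set.Ioi (0 : ℝ))) V)
    (N : ℕ) :
    Tendsto
      (fun hb : ℝ =>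
        Jfun C φ ε hb (x₀ + 2 * (π : ℂ) * (N : ℂ) * (hb : ℂ)) / Jfun C φ ε hb x₀)
      (nhdsWithin 0 (Set.Ioi (0 : ℝ)))
      (nhds (Complex.exp (Complex.I * (N : ℂ) * deriv φ x₀))) := by
  obtain ⟨V, hV, hVu⟩ := hε
  have hx₀V : x₀ ∈ V := mem_of_mem_nhds hV
  set l := nhdsWithin (0:ℝ) (Set.Ioi (0:ℝ)) with hl
  have hCd : C x₀ ≠ 0 := hC0 x₀ hx₀
  have hpos : ∀ᶠ hb in l, (0:ℝ) < hb := eventually_mem_nhdsWithin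
  have hsmall : ∀ᶠ hb in l, ∀ x ∈ V, ‖ε hb x‖ < 1/2 := by
    have := Metric.tendstoUniformlyOn_iff.mp hVu (1/2) (by norm_num)
    filter_upwards [this] with hb h x hx
    simpa [dist_zero_left] using h x hx
  have hεdne : ∀ (hb : ℝ), (∀ x ∈ V, ‖ε hb x‖ < 1/2) → (1 + ε hb x₀) ≠ 0 := by
    intro hb hsm h
    have h1 : ε hb x₀ = -1 := by linear_combination h
    have := hsm x₀ hx₀V
    rw [h1] at this
    norm_num at this
  rcases Nat.eq_zero_or_pos N with hN | hN
  · subst hN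
    simp only [Nat.cast_zero, mul_zero, zero_mul, add_zero, Complex.exp_zero]
    refine Tendsto.congr' ?_ (tendsto_const_nhds : Tendsto (fun _ : ℝ => (1:ℂ)) l (nhds 1))
    filter_upwards [hpos, hsmall] with hb hhb hsm
    have h2π : (2 * (π:ℂ) * (hb:ℂ)) ≠ 0 := by
      simp [Real.pi_ne_zero, Complex.ofReal_ne_zero, hhb.ne']
    have hJ : Jfun C φ ε hb x₀ ≠ 0 :=
      mul_ne_zero (mul_ne_zero (div_ne_zero hCd h2π) (Complex.exp_ne_zero _))
        (hεdne hb hsm)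
    exact (div_self hJ).symm
  · have hNC : (N:ℂ) ≠ 0 := Nat.cast_ne_zero.mpr hN.ne'
    set a : ℝ → ℂ := fun hb => x₀ + 2 * (π:ℂ) * (N:ℂ) * (hb:ℂ) with ha
    have hacont : Tendsto a l (nhds x₀) := by
      have : Tendsto (fun hb : ℝ => x₀ + 2 * (π:ℂ) * (N:ℂ) * (hb:ℂ)) (nhds 0)
          (nhds (x₀ + 2 * (π:ℂ) * (N:ℂ) * ((0:ℝ):ℂ))) := by
        apply Continuous.tendsto; continuity
      simpa using this.mono_left nhdsWithin_le_nhds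
    have haV : ∀ᶠ hb in l, a hb ∈ V := hacont.eventually_mem hV
    have hne : ∀ᶠ hb in l, a hb ≠ x₀ := by
      filter_upwards [hpos] with hb hhb h
      have ht : 2 * (π:ℂ) * (N:ℂ) * (hb:ℂ) = 0 := by
        have := h
        simp only [ha] at this
        linear_combination this
      have : (2 * (π:ℂ) * (N:ℂ) * (hb:ℂ)) ≠ 0 := by
        simp [Real.pi_ne_zero, Complex.ofReal_ne_zero, hhb.ne', hNC]
      exact this ht
    have key : ∀ g : ℝ → ℂ, (∀ᶠ hb in l, g hb ∈ V) →
        Tendsto (fun hb => ε hb (g hb)) l (nhds 0) := by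
      intro g hg
      rw [Metric.tendsto_nhds]
      intro η hη
      have := Metric.tendstoUniformlyOn_iff.mp hVu η hη
      filter_upwards [this, hg] with hb h hgV
      simpa [dist_comm] using h (g hb) hgV
    have hε1 : Tendsto (fun hb => ε hb (a hb)) l (nhds 0) := key _ haV
    have hε2 : Tendsto (fun hb => ε hb x₀) l (nhds 0) :=
      key _ (Eventually.of_forall fun _ => hx₀V)
    have hf3 : Tendsto (fun hb => (1 + ε hb (a hb)) / (1 + ε hb x₀)) l (nhds 1) := by
      have h1 : Tendsto (fun hb => 1 + ε hb (a hb)) l (nhds 1) := by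
        simpa using tendsto_const_nhds.add hε1
      have h2 : Tendsto (fun hb => 1 + ε hb x₀) l (nhds 1) := by
        simpa using tendsto_const_nhds.add hε2
      simpa [Pi.div_def] using h1.div h2 one_ne_zero
    have hCx : ContinuousAt C x₀ := hC.continuousAt (h𝒪.mem_nhds hx₀)
    have hf1 : Tendsto (fun hb => C (a hb) / C x₀) l (nhds 1) := by
      have := (hCx.tendsto.comp hacont).div tendsto_const_nhds hCd
      simpa [div_self hCd, Pi.div_def, Function.comp_def] using this
    have hd : DifferentiableAt ℂ φ x₀ := hφ.differentiableAt (h𝒪.mem_nhds hx₀)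
    have hslope : Tendsto (fun hb => slope φ x₀ (a hb)) l (nhds (deriv φ x₀)) := by
      have hs := hasDerivAt_iff_tendsto_slope.mp hd.hasDerivAt
      refine hs.comp ?_
      rw [tendsto_nhdsWithin_iff]
      exact ⟨hacont, by filter_upwards [hne] with hb h using h⟩
    have hf2 : Tendsto (fun hb => Complex.exp (Complex.I * (N:ℂ) * slope φ x₀ (a hb))) l
        (nhds (Complex.exp (Complex.I * (N:ℂ) * deriv φ x₀))) :=
      (Complex.continuous_exp.tendsto _).comp (tendsto_const_nhds.mul hslope)
    have hlim : Tendsto (fun hb => (C (a hb) / C x₀) *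
        Complex.exp (Complex.I * (N:ℂ) * slope φ x₀ (a hb)) *
        ((1 + ε hb (a hb)) / (1 + ε hb x₀))) l
        (nhds (Complex.exp (Complex.I * (N:ℂ) * deriv φ x₀))) := by
      have := (hf1.mul hf2).mul hf3
      simpa using this
    refine hlim.congr' ?_
    filter_upwards [hpos, hsmall, hne] with hb hhb hsm hneb
    have h2π : (2 * (π:ℂ) * (hb:ℂ)) ≠ 0 := by
      simp [Real.pi_ne_zero, Complex.ofReal_ne_zero, hhb.ne']
    have hεd : (1 + ε hb x₀) ≠ 0 := hεdne hb hsm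
    have hsub : a hb - x₀ = 2 * (π:ℂ) * (N:ℂ) * (hb:ℂ) := by
      simp only [ha]; ring
    have hπ : ((π:ℝ):ℂ) ≠ 0 := Complex.ofReal_ne_zero.mpr Real.pi_ne_zero
    have hhb' : ((hb:ℝ):ℂ) ≠ 0 := Complex.ofReal_ne_zero.mpr hhb.ne'
    have harg : Complex.I * (N:ℂ) * slope φ x₀ (a hb) =
        Complex.I * φ (a hb) / (2 * (π:ℂ) * (hb:ℂ)) -
        Complex.I * φ x₀ / (2 * (π:ℂ) * (hb:ℂ)) := by
      rw [slope_def_field, hsub]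
      field_simp
    rw [harg, Complex.exp_sub]
    simp only [Jfun]
    field_simp [Complex.exp_ne_zero]
    rw [show x₀ + 2 * (π:ℂ) * (hb:ℂ) * (N:ℂ) = a hb by simp only [ha]; ring]
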